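/- Let D = (D₁, D₂) be a bipartite degree sequence such that D₁ is almost regular with degrees k₁ and k₁ + 1, and D₂ is almost regular with degrees k₂ and k₂ + 1. If the sum of the entries of D₁ equals the sum of the entries of D₂, k₁ + 1 ≤ |D₂| and k₂ + 1 ≤ |D₁|, then D has a simple bipartite graph realization. -/

import Mathlib

/-- A bipartite degree sequence `(D₁, D₂)` is graphic: there exists a simple bipartite graph,
given by its edge set `E ⊆ U × V` (no multiple edges), whose degrees on `U` are exactly `D₁`
and on `V` are exactly `D₂`. -/
def BipartiteGraphic {n m : ℕ} (D₁ : Fin n → ℕ) (D₂ : Fin m → ℕ) : Prop :=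
  ∃ E : Finset (Fin n × Fin m),
    (∀ u, (E.filter fun e => e.1 = u).card = D₁ u) ∧
    (∀ v, (E.filter fun e => e.2 = v).card = D₂ v)


/-- counts naturals `< x` congruent to `w` mod `m` (for `w < m`). -/
def Ncnt (m w x : ℕ) : ℕ := (x + (m - 1 - w)) / m

lemma Ncnt_mono (m w : ℕ) : Monotone (Ncnt m w) :=
  fun a b h => Nat.div_le_div_right (by omega)

lemma Ncnt_succ (m w x : ℕ) (hm : 0 < m) (hw : w < m) :
    Ncnt m w (x + 1) = Ncnt m w x + (if x % m = w then 1 else 0) := by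
  have hx : x % m < m := Nat.mod_lt x hm
  have hdiv : m * (x / m) + x % m = x := Nat.div_add_mod x m
  set r := x % m with hr
  set q := x / m with hq
  unfold Ncnt
  have h1 : x + 1 + (m - 1 - w) = m * q + (r + 1 + (m - 1 - w)) := by omega
  have h2 : x + (m - 1 - w) = m * q + (r + (m - 1 - w)) := by omega
  rw [h1, h2, Nat.mul_add_div hm, Nat.mul_add_div hm]
  rcases lt_trichotomy r w with h | h | h
  · rw [if_neg (by omega), Nat.div_eq_of_lt (by omega), Nat.div_eq_of_lt (by omega)]
  · rw [if_pos h]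
    have e1 : r + 1 + (m - 1 - w) = m := by omega
    rw [e1, Nat.div_self hm, Nat.div_eq_of_lt (by omega)]
  · rw [if_neg (by omega)]
    have e1 : r + 1 + (m - 1 - w) = (r - w) + m := by omega
    have e2 : r + (m - 1 - w) = (r - w - 1) + m := by omega
    rw [e1, e2, Nat.add_div_right _ hm, Nat.add_div_right _ hm,
      Nat.div_eq_of_lt (by omega), Nat.div_eq_of_lt (by omega)]

lemma count_residue (m w : ℕ) (hm : 0 < m) (hw : w < m) (c d : ℕ) :
    ((Finset.range d).filter (fun j => (c + j) % m = w)).card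
      = Ncnt m w (c + d) - Ncnt m w c := by
  induction d with
  | zero => simp [Nat.sub_self, Nat.le_refl]
  | succ d ih =>
    have hmono : Ncnt m w c ≤ Ncnt m w (c + d) := Ncnt_mono m w (by omega)
    have hstep := Ncnt_succ m w (c + d) hm hw
    rw [Finset.range_add_one, Finset.filter_insert]
    by_cases h : (c + d) % m = w
    · rw [if_pos h, Finset.card_insert_of_notMem (by simp)]
      rw [if_pos h] at hstep
      have : c + (d + 1) = (c + d) + 1 := by omega
      rw [this, hstep]
      omega
    · rw [if_neg h]
      rw [if_neg h] at hstep
      have : c + (d + 1) = (c + d) + 1 := by omega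
      rw [this, hstep]
      omega

lemma res_inj {m c j₁ j₂ : ℕ} (h₁ : j₁ < m) (h₂ : j₂ < m)
    (h : (c + j₁) % m = (c + j₂) % m) : j₁ = j₂ := by
  have h' : j₁ ≡ j₂ [MOD m] := Nat.ModEq.add_left_cancel' c h
  have := h'
  unfold Nat.ModEq at this
  rwa [Nat.mod_eq_of_lt h₁, Nat.mod_eq_of_lt h₂] at this

lemma block_indicator (m w c d : ℕ) (hm : 0 < m) (hd : d ≤ m) :
    ((Finset.range d).filter (fun j => (c + j) % m = w)).card
      = if (∃ j ∈ Finset.range d, (c + j) % m = w) then 1 else 0 := by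
  by_cases h : ∃ j ∈ Finset.range d, (c + j) % m = w
  · rw [if_pos h]
    obtain ⟨j, hj, hjw⟩ := h
    have hne : ((Finset.range d).filter (fun j => (c + j) % m = w)).Nonempty :=
      ⟨j, Finset.mem_filter.mpr ⟨hj, hjw⟩⟩
    have hle : ((Finset.range d).filter (fun j => (c + j) % m = w)).card ≤ 1 := by
      apply Finset.card_le_one.mpr
      intro a ha b hb
      simp only [Finset.mem_filter, Finset.mem_range] at ha hb
      exact res_inj (lt_of_lt_of_le ha.1 hd) (lt_of_lt_of_le hb.1 hd)
        (ha.2.trans hb.2.symm)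
    have := Finset.Nonempty.card_pos hne
    omega
  · rw [if_neg h, Finset.card_eq_zero]
    push_neg at h
    ext a
    simp only [Finset.mem_filter, Finset.mem_range, Finset.notMem_empty, iff_false, not_and]
    intro ha
    exact h a (Finset.mem_range.mpr ha)

lemma tele (g : ℕ → ℕ) (hg : Monotone g) (n : ℕ) :
    ∑ a ∈ Finset.range n, (g (a + 1) - g a) = g n - g 0 := by
  induction n with
  | zero => simp
  | succ n ih =>
    rw [Finset.sum_range_succ, ih]
    have h1 : g 0 ≤ g n := hg (Nat.zero_le n)
    have h2 : g n ≤ g (n + 1) := hg (by omega)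
    omega

lemma card_val_lt (m t : ℕ) (ht : t ≤ m) :
    (Finset.univ.filter fun w : Fin m => (w : ℕ) < t).card = t := by
  have h : ∀ x ∈ Finset.range t, x < m := fun x hx =>
    lt_of_lt_of_le (Finset.mem_range.mp hx) ht
  have he : Finset.univ.filter (fun w : Fin m => (w : ℕ) < t)
      = (Finset.range t).attachFin h := by
    ext w
    simp [Finset.mem_attachFin]
  rw [he, Finset.card_attachFin, Finset.card_range]

lemma subtypeCongr_prop {α : Type*} {p q : α → Prop} [DecidablePred p] [DecidablePred q]
    (e : { x // p x } ≃ { x // q x }) (e' : { x // ¬p x } ≃ { x // ¬q x }) (a : α) :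
    (p a → q (e.subtypeCongr e' a)) ∧ (¬p a → ¬q (e.subtypeCongr e' a)) := by
  constructor
  · intro h
    simp only [Equiv.subtypeCongr, Equiv.trans_apply, Equiv.sumCompl_symm_apply_of_pos h,
      Equiv.sumCongr_apply, Sum.map_inl, Equiv.sumCompl_apply_inl]
    exact (e ⟨a, h⟩).2
  · intro h
    simp only [Equiv.subtypeCongr, Equiv.trans_apply, Equiv.sumCompl_symm_apply_of_neg h,
      Equiv.sumCongr_apply, Sum.map_inr, Equiv.sumCompl_apply_inr]
    exact (e' ⟨a, h⟩).2


theorem statement6 {n m : ℕ} (k₁ k₂ : ℕ) (D₁ : Fin n → ℕ) (D₂ : Fin m → ℕ)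
    (h₁ : ∀ i, D₁ i = k₁ ∨ D₁ i = k₁ + 1)
    (h₂ : ∀ j, D₂ j = k₂ ∨ D₂ j = k₂ + 1)
    (hsum : ∑ i, D₁ i = ∑ j, D₂ j)
    (hk₁ : k₁ + 1 ≤ m) (hk₂ : k₂ + 1 ≤ n) :
    BipartiteGraphic D₁ D₂ := by
  classical
  have hm : 0 < m := by omega
  -- the number of vertices on the right with degree k₂+1
  set t := (Finset.univ.filter fun v : Fin m => D₂ v = k₂ + 1).card with ht_def
  have ht : t ≤ m := le_trans (Finset.card_filter_le _ _) (by simp)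
  -- degree sums
  set S := ∑ i, D₁ i with hS_def
  have hS2 : S = m * k₂ + t := by
    rw [hsum, ht_def, Finset.card_filter]
    have : ∀ v : Fin m, D₂ v = k₂ + (if D₂ v = k₂ + 1 then 1 else 0) := by
      intro v
      rcases h₂ v with h | h <;> rw [h] <;> simp <;> omega
    rw [Finset.sum_congr rfl fun v _ => this v, Finset.sum_add_distrib,
      Finset.sum_const, Finset.card_univ, Fintype.card_fin, smul_eq_mul]
  -- the permutation of the right side sending high-degree vertices to low positions
  have hcardA : Fintype.card {v : Fin m // D₂ v = k₂ + 1} = t := by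
    rw [Fintype.card_subtype]
  have hcardB : Fintype.card {w : Fin m // (w : ℕ) < t} = t := by
    rw [Fintype.card_subtype, card_val_lt m t ht]
  have e₁ : {v : Fin m // D₂ v = k₂ + 1} ≃ {w : Fin m // (w : ℕ) < t} :=
    Fintype.equivOfCardEq (by rw [hcardA, hcardB])
  have e₂ : {v : Fin m // ¬D₂ v = k₂ + 1} ≃ {w : Fin m // ¬(w : ℕ) < t} :=
    Fintype.equivOfCardEq (by
      rw [Fintype.card_subtype_compl, Fintype.card_subtype_compl, hcardA, hcardB])
  set f : Equiv.Perm (Fin m) := e₁.subtypeCongr e₂ with hf_def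
  have key : ∀ v : Fin m, ((f v : Fin m) : ℕ) < t ↔ D₂ v = k₂ + 1 := by
    intro v
    have hp := subtypeCongr_prop e₁ e₂ v
    by_cases h : D₂ v = k₂ + 1
    · exact ⟨fun _ => h, fun _ => hp.1 h⟩
    · exact ⟨fun hlt => absurd hlt (hp.2 h), fun hc => absurd hc h⟩
  -- block starts
  set d : ℕ → ℕ := fun a => if h : a < n then D₁ ⟨a, h⟩ else 0 with hd_def
  set C : ℕ → ℕ := fun a => ∑ x ∈ Finset.range a, d x with hC_def
  have hdD : ∀ i : Fin n, d (i : ℕ) = D₁ i := by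
    intro i
    simp [hd_def, i.isLt]
  have hCn : C n = S := by
    show (∑ x ∈ Finset.range n, d x) = S
    rw [← Fin.sum_univ_eq_sum_range]
    exact Finset.sum_congr rfl fun i _ => hdD i
  have hD₁le : ∀ i : Fin n, D₁ i ≤ m := by
    intro i
    rcases h₁ i with h | h <;> omega
  -- the edge set
  refine ⟨Finset.univ.filter fun e : Fin n × Fin m =>
    ∃ j ∈ Finset.range (D₁ e.1), (C (e.1 : ℕ) + j) % m = ((f e.2 : Fin m) : ℕ), ?_, ?_⟩
  · -- row degrees
    intro u
    set g : Finset ℕ := (Finset.range (D₁ u)).image (fun j => (C (u : ℕ) + j) % m) with hg_def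
    have hgsub : ∀ x ∈ g, x < m := by
      intro x hx
      obtain ⟨j, _, rfl⟩ := Finset.mem_image.mp hx
      exact Nat.mod_lt _ hm
    have step1 : ((Finset.univ.filter fun e : Fin n × Fin m =>
        ∃ j ∈ Finset.range (D₁ e.1), (C (e.1 : ℕ) + j) % m = ((f e.2 : Fin m) : ℕ)).filter
          fun e => e.1 = u).card
        = (Finset.univ.filter fun v : Fin m => ((f v : Fin m) : ℕ) ∈ g).card := by
      apply Finset.card_nbij (fun e => e.2)
      · intro e he
        simp only [Finset.mem_coe, Finset.mem_filter, Finset.mem_univ, true_and] at he ⊢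
        obtain ⟨⟨j, hj, hjw⟩, h1⟩ := he
        rw [h1] at hjw hj
        exact Finset.mem_image.mpr ⟨j, hj, hjw⟩
      · intro a ha b hb hab
        simp only [Finset.mem_coe, Finset.mem_filter] at ha hb
        exact Prod.ext (ha.2.trans hb.2.symm) hab
      · intro x hx
        simp only [Finset.mem_coe, Finset.mem_filter, Finset.mem_univ, true_and] at hx
        obtain ⟨j, hj, hjw⟩ := Finset.mem_image.mp hx
        exact ⟨(u, x), Finset.mem_coe.mpr (Finset.mem_filter.mpr
          ⟨Finset.mem_filter.mpr ⟨Finset.mem_univ _, j, hj, hjw⟩, rfl⟩), rfl⟩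
    have step2 : (Finset.univ.filter fun v : Fin m => ((f v : Fin m) : ℕ) ∈ g).card
        = (Finset.univ.filter fun w : Fin m => (w : ℕ) ∈ g).card := by
      apply Finset.card_equiv f
      intro v
      simp
    have step3 : (Finset.univ.filter fun w : Fin m => (w : ℕ) ∈ g).card = g.card := by
      have he : Finset.univ.filter (fun w : Fin m => (w : ℕ) ∈ g) = g.attachFin hgsub := by
        ext w
        simp [Finset.mem_attachFin]
      rw [he, Finset.card_attachFin]
    have step4 : g.card = D₁ u := by
      rw [hg_def, Finset.card_image_of_injOn, Finset.card_range]
      intro a ha b hb hab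
      simp only [Finset.coe_range, Set.mem_Iio] at ha hb
      exact res_inj (lt_of_lt_of_le ha (hD₁le u)) (lt_of_lt_of_le hb (hD₁le u)) hab
    rw [step1, step2, step3, step4]
  · -- column degrees
    intro v
    set w : ℕ := ((f v : Fin m) : ℕ) with hw_def
    have hw : w < m := (f v).isLt
    have step1 : ((Finset.univ.filter fun e : Fin n × Fin m =>
        ∃ j ∈ Finset.range (D₁ e.1), (C (e.1 : ℕ) + j) % m = ((f e.2 : Fin m) : ℕ)).filter
          fun e => e.2 = v).card
        = (Finset.univ.filter fun i : Fin n =>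
            ∃ j ∈ Finset.range (D₁ i), (C (i : ℕ) + j) % m = w).card := by
      apply Finset.card_nbij (fun e => e.1)
      · intro e he
        simp only [Finset.mem_coe, Finset.mem_filter, Finset.mem_univ, true_and] at he ⊢
        obtain ⟨⟨j, hj, hjw⟩, h1⟩ := he
        rw [h1] at hjw
        exact ⟨j, hj, hjw⟩
      · intro a ha b hb hab
        simp only [Finset.mem_coe, Finset.mem_filter] at ha hb
        exact Prod.ext hab (ha.2.trans hb.2.symm)
      · intro i hi
        simp only [Finset.mem_coe, Finset.mem_filter, Finset.mem_univ, true_and] at hi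
        obtain ⟨j, hj, hjw⟩ := hi
        exact ⟨(i, v), Finset.mem_coe.mpr (Finset.mem_filter.mpr
          ⟨Finset.mem_filter.mpr ⟨Finset.mem_univ _, j, hj, hjw⟩, rfl⟩), rfl⟩
    rw [step1, Finset.card_filter]
    have step2 : ∀ i : Fin n,
        (if ∃ j ∈ Finset.range (D₁ i), (C (i : ℕ) + j) % m = w then 1 else 0)
          = Ncnt m w (C ((i : ℕ) + 1)) - Ncnt m w (C (i : ℕ)) := by
      intro i
      rw [← block_indicator m w (C (i : ℕ)) (D₁ i) hm (hD₁le i),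
        count_residue m w hm hw]
      have : C ((i : ℕ) + 1) = C (i : ℕ) + D₁ i := by
        simp only [hC_def]
        rw [Finset.sum_range_succ, hdD i]
      rw [this]
    rw [Finset.sum_congr rfl fun i _ => step2 i]
    have htele : ∑ i : Fin n, (Ncnt m w (C ((i : ℕ) + 1)) - Ncnt m w (C (i : ℕ)))
        = Ncnt m w (C n) - Ncnt m w (C 0) := by
      have hmono : Monotone (fun x => Ncnt m w (C x)) := by
        intro a b hab
        apply Ncnt_mono
        simp only [hC_def]
        exact Finset.sum_le_sum_of_subset (Finset.range_subset_range.mpr hab)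
      rw [Fin.sum_univ_eq_sum_range (fun a => Ncnt m w (C (a + 1)) - Ncnt m w (C a))]
      exact tele (fun x => Ncnt m w (C x)) hmono n
    rw [htele, hCn]
    have hC0 : C 0 = 0 := by simp [hC_def]
    have hN0 : Ncnt m w 0 = 0 := by
      unfold Ncnt
      exact Nat.div_eq_of_lt (by omega)
    rw [hC0, hN0, Nat.sub_zero]
    -- final arithmetic
    rcases h₂ v with hv | hv
    · have hwt : ¬ w < t := fun hc => by
        have := (key v).mp hc
        omega
      unfold Ncnt
      rw [hS2]
      have : m * k₂ + t + (m - 1 - w) = m * k₂ + (t + (m - 1 - w)) := by omega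
      rw [this, Nat.mul_add_div hm, Nat.div_eq_of_lt (by omega)]
      omega
    · have hwt : w < t := (key v).mpr hv
      unfold Ncnt
      rw [hS2]
      have : m * k₂ + t + (m - 1 - w) = m * k₂ + ((t + (m - 1 - w) - m) + m) := by omega
      rw [this, Nat.mul_add_div hm, Nat.add_div_right _ hm, Nat.div_eq_of_lt (by omega)]
      omega
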